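/- (VC dimension lower bounds the ℤ₂-coindex of the sign complex.) Let A : Fin M → Fin N → ℤ be a partial sign matrix and let S be a finset of columns with |S| = d ≥ 1 which is shattered by A. Then there exists a continuous map f from the unit sphere S^{d−1} (the set {x ∈ EuclideanSpace ℝ (Fin d) : ‖x‖ = 1}) into ℝ^N such that f(x) ∈ |S(A)| and f(−x) = −f(x) for all x ∈ S^{d−1}. In particular VC(A) − 1 ≤ coind_{ℤ₂}(S(A)). -/

import Mathlib

open scoped Pointwise

/-- The realized simplex of row `i` of the partial sign matrix `A`. -/
noncomputable def rowSimplex {M N : ℕ} (A : Fin M → Fin N → ℤ) (i : Fin M) :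
    Set (Fin N → ℝ) :=
  convexHull ℝ
    ({x | ∃ j, A i j = 1 ∧ x = Pi.single j (1 : ℝ)} ∪
     {x | ∃ j, A i j = -1 ∧ x = -Pi.single j (1 : ℝ)})

/-- The crosspolytope realization `|S(A)|` of the sign complex of `A`. -/
noncomputable def signComplexReal {M N : ℕ} (A : Fin M → Fin N → ℤ) :
    Set (Fin N → ℝ) :=
  ⋃ i, (rowSimplex A i ∪ -(rowSimplex A i))

/-- VC dimension lower bounds the ℤ₂-coindex of the sign complex: if a set of
`d ≥ 1` columns is shattered by `A`, then there is a ℤ₂-equivariant continuous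
map `S^{d-1} → |S(A)|`; in particular `VC(A) - 1 ≤ coind_{ℤ₂}(S(A))`. -/
theorem vc_le_coindex {M N : ℕ} (A : Fin M → Fin N → ℤ)
    (hA : ∀ i j, A i j = -1 ∨ A i j = 0 ∨ A i j = 1)
    (S : Finset (Fin N)) (d : ℕ) (hd : 1 ≤ d) (hcard : S.card = d)
    (hshatter : ∀ P : Fin N → ℤ, (∀ j ∈ S, P j = 1 ∨ P j = -1) →
      ∃ i, ∀ j ∈ S, A i j = P j) :
    ∃ f : EuclideanSpace ℝ (Fin d) → (Fin N → ℝ),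
      ContinuousOn f (Metric.sphere (0 : EuclideanSpace ℝ (Fin d)) 1) ∧
      (∀ x ∈ Metric.sphere (0 : EuclideanSpace ℝ (Fin d)) 1,
        f x ∈ signComplexReal A) ∧
      (∀ x ∈ Metric.sphere (0 : EuclideanSpace ℝ (Fin d)) 1,
        f (-x) = -f x) := by
  classical
  set e := S.orderIsoOfFin hcard with he
  set n : EuclideanSpace ℝ (Fin d) → ℝ := fun x => ∑ k, |x k| with hn
  have hnpos : ∀ x ∈ Metric.sphere (0 : EuclideanSpace ℝ (Fin d)) 1, 0 < n x := by
    intro x hx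
    rcases lt_or_eq_of_le (Finset.sum_nonneg fun k _ => abs_nonneg (x k)) with h | h
    · exact h
    · exfalso
      have hx0 : x = 0 := by
        ext k
        have := (Finset.sum_eq_zero_iff_of_nonneg
          (fun k _ => abs_nonneg (x k))).mp h.symm k (Finset.mem_univ k)
        simpa [abs_eq_zero] using this
      rw [Metric.mem_sphere, hx0, dist_self] at hx
      norm_num at hx
  refine ⟨fun x => (n x)⁻¹ • (∑ k, x k • (Pi.single (e k : Fin N) (1 : ℝ) : Fin N → ℝ)), ?_, ?_, ?_⟩
  · apply ContinuousOn.fun_smul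
    · apply ContinuousOn.inv₀
      · exact (continuous_finset_sum _ fun k _ => (PiLp.continuous_apply (p := 2) (β := fun _ : Fin d => ℝ) k).abs).continuousOn
      · exact fun x hx => (hnpos x hx).ne'
    · exact (continuous_finset_sum _ fun k _ =>
        (PiLp.continuous_apply (p := 2) (β := fun _ : Fin d => ℝ) k).smul continuous_const).continuousOn
  · intro x hx
    set P : Fin N → ℤ := fun j =>
      if h : j ∈ S then (if x (e.symm ⟨j, h⟩) < 0 then -1 else 1) else 1 with hP
    have hPvalid : ∀ j ∈ S, P j = 1 ∨ P j = -1 := by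
      intro j hj
      simp only [hP, dif_pos hj]
      split <;> simp
    obtain ⟨i, hi⟩ := hshatter P hPvalid
    have hPk : ∀ k : Fin d, P (e k : Fin N) = if x k < 0 then -1 else 1 := by
      intro k
      have hm : (e k : Fin N) ∈ S := (e k).2
      simp only [hP, dif_pos hm]
      exact if_congr (by rw [show e.symm ⟨(e k : Fin N), hm⟩ = k from e.symm_apply_apply k])
        rfl rfl
    set q : Fin d → (Fin N → ℝ) := fun k =>
      if x k < 0 then -Pi.single (e k : Fin N) (1 : ℝ)
      else Pi.single (e k : Fin N) (1 : ℝ) with hq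
    have hmain : (n x)⁻¹ • (∑ k, x k • (Pi.single (e k : Fin N) (1 : ℝ) : Fin N → ℝ)) =
        Finset.univ.centerMass (fun k => |x k|) q := by
      rw [Finset.centerMass]
      congr 1
      apply Finset.sum_congr rfl
      intro k _
      simp only [hq]
      by_cases hk : x k < 0
      · rw [if_pos hk, smul_neg, abs_of_neg hk, neg_smul, neg_neg]
      · rw [if_neg hk, abs_of_nonneg (not_lt.mp hk)]
    show (n x)⁻¹ • (∑ k, x k • (Pi.single (e k : Fin N) (1 : ℝ) : Fin N → ℝ)) ∈
      signComplexReal A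
    rw [hmain]
    apply Set.mem_iUnion.mpr
    refine ⟨i, Or.inl ?_⟩
    apply Finset.centerMass_mem_convexHull
    · exact fun k _ => abs_nonneg (x k)
    · exact hnpos x hx
    · intro k _
      simp only [hq]
      by_cases hk : x k < 0
      · rw [if_pos hk]
        refine Or.inr ⟨(e k : Fin N), ?_, rfl⟩
        rw [hi _ (e k).2, hPk k, if_pos hk]
      · rw [if_neg hk]
        refine Or.inl ⟨(e k : Fin N), ?_, rfl⟩
        rw [hi _ (e k).2, hPk k, if_neg hk]
  · intro x hx
    have hnn : n (-x) = n x := by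
      simp only [hn]
      apply Finset.sum_congr rfl
      intro k _
      have : (-x) k = -(x k) := rfl
      rw [this, abs_neg]
    show (n (-x))⁻¹ • (∑ k, (-x) k • (Pi.single (e k : Fin N) (1 : ℝ) : Fin N → ℝ)) =
      -((n x)⁻¹ • (∑ k, x k • (Pi.single (e k : Fin N) (1 : ℝ) : Fin N → ℝ)))
    rw [hnn, ← smul_neg, ← Finset.sum_neg_distrib]
    congr 1
    apply Finset.sum_congr rfl
    intro k _
    have : (-x) k = -(x k) := rfl
    rw [this, neg_smul]
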